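/- arXiv:0707.0479 — 8 statements merged into one kernel-verified Lean document; each statement's English description precedes it below -/
import Mathlib

section
/- Let X and S be finite sets. The polytope of joint probability distributions p on X^S (functions from S to X, i.e., tuples indexed by S) satisfying prescribed marginal distributions for each coordinate (i.e., for each s in S, the marginal of the s-th coordinate equals a given probability vector on X) is nonempty whenever the prescribed marginals are probability distributions, and every extreme point of this polytope has at most |X||S| - |S| + 1 nonzero entries. -/
open Finset

/-- The polytope of joint distributions on `S → X` with prescribed
coordinate marginals `q s` is nonempty when each `q s` is a probability vector, and
every extreme point has at most `|X||S| - |S| + 1` nonzero entries. -/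
theorem stmt_0 {X S : Type*} [Fintype X] [Fintype S] [DecidableEq X] [DecidableEq S]
    (q : S → X → ℝ) (hq0 : ∀ s x, 0 ≤ q s x) (hq1 : ∀ s, ∑ x, q s x = 1) :
    let P : Set ((S → X) → ℝ) :=
      {p | (∀ t, 0 ≤ p t) ∧
        ∀ s x, ∑ t ∈ Finset.univ.filter (fun t : S → X => t s = x), p t = q s x}
    P.Nonempty ∧
      ∀ p ∈ Set.extremePoints ℝ P,
        (Function.support p).ncard ≤
          Fintype.card X * Fintype.card S - Fintype.card S + 1 := by
  intro P
  constructor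
  · -- Nonemptiness: the product distribution works
    refine ⟨fun t => ∏ s, q s (t s), fun t => Finset.prod_nonneg fun s _ => hq0 s (t s), ?_⟩
    intro s x
    set g : S → X → ℝ := fun s' y => if s' = s then (if y = x then q s y else 0) else q s' y
      with hg
    calc ∑ t ∈ Finset.univ.filter (fun t : S → X => t s = x), ∏ s', q s' (t s')
        = ∑ t : S → X, ∏ s', g s' (t s') := by
          rw [Finset.sum_filter]
          refine Finset.sum_congr rfl fun t _ => ?_
          by_cases h : t s = x
          · rw [if_pos h]
            refine Finset.prod_congr rfl fun s' _ => ?_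
            by_cases hs : s' = s
            · subst hs; simp [hg, h]
            · simp [hg, hs]
          · rw [if_neg h]
            symm
            exact Finset.prod_eq_zero (Finset.mem_univ s) (by simp [hg, h])
      _ = ∏ s', ∑ y, g s' y := (Fintype.prod_sum g).symm
      _ = q s x := by
          rw [Finset.prod_eq_single s (fun s' _ hs => by simpa [hg, hs] using hq1 s')
            (by simp)]
          simp [hg]
  · -- Extreme point support bound
    intro p hp
    classical
    have hpP : p ∈ P := hp.1
    have hpnn : ∀ t, 0 ≤ p t := hpP.1
    by_cases hS : Nonempty S
    swap
    · -- S empty: the domain S → X is a singleton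
      have h1 : Fintype.card (S → X) = 1 := by
        rw [Fintype.card_fun]
        simp [Fintype.card_eq_zero_iff.2 (not_nonempty_iff.1 hS)]
      have := Set.ncard_le_ncard (Set.subset_univ (Function.support p))
        (Set.finite_univ)
      rw [Set.ncard_univ, Nat.card_eq_fintype_card, h1] at this
      omega
    have hX : Nonempty X := by
      by_contra hX
      have := hq1 (Classical.arbitrary S)
      rw [not_nonempty_iff] at hX
      simp at this
    obtain ⟨x₀⟩ := hX
    by_contra hcard
    push_neg at hcard
    set T : Finset (S → X) := Finset.univ.filter (fun t => p t ≠ 0) with hT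
    have hsupp : Function.support p = ↑T := by
      ext t; simp [hT, Function.mem_support]
    rw [hsupp, Set.ncard_coe_finset] at hcard
    -- the row index type for constraints
    have hsub : Fintype.card {x : X // x ≠ x₀} = Fintype.card X - 1 := by
      rw [Fintype.card_subtype, Finset.filter_ne', Finset.card_erase_of_mem (Finset.mem_univ _),
        Finset.card_univ]
    have hcardR : Fintype.card ((S × {x : X // x ≠ x₀}) ⊕ Unit)
        = Fintype.card X * Fintype.card S - Fintype.card S + 1 := by
      rw [Fintype.card_sum, Fintype.card_prod, hsub, Fintype.card_unit]
      obtain ⟨c, hc⟩ : ∃ c, Fintype.card X = c + 1 :=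
        ⟨Fintype.card X - 1, by have := Fintype.card_pos_iff.2 ⟨x₀⟩; omega⟩
      rw [hc, Nat.add_sub_cancel, Nat.add_mul, one_mul, Nat.add_sub_cancel, Nat.mul_comm]
    -- the constraint matrix restricted to the support
    set M : Matrix ((S × {x : X // x ≠ x₀}) ⊕ Unit) (↥T) ℝ := fun r t =>
      match r with
      | Sum.inl (s, x) => if (t : S → X) s = (x : X) then 1 else 0
      | Sum.inr _ => 1 with hM
    have hrank : ¬ Function.Injective M.mulVecLin := by
      intro hinj
      have := LinearMap.finrank_le_finrank_of_injective hinj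
      rw [Module.finrank_pi, Module.finrank_pi, Fintype.card_coe, hcardR] at this
      omega
    rw [← LinearMap.ker_eq_bot] at hrank
    obtain ⟨d, hd0, hdne⟩ := Submodule.ne_bot_iff _ |>.1 hrank
    rw [LinearMap.mem_ker] at hd0
    -- extend d by zero to the whole space
    set d' : (S → X) → ℝ := fun t => if h : t ∈ T then d ⟨t, h⟩ else 0 with hd'
    have hd'supp : ∀ t ∉ T, d' t = 0 := fun t ht => dif_neg ht
    have key : ∀ (c : (S → X) → Prop) [DecidablePred c],
        ∑ t ∈ Finset.univ.filter c, d' t = ∑ t : ↥T, if c ↑t then d t else 0 := by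
      intro c _
      rw [Finset.sum_filter,
        ← Finset.sum_subset (Finset.subset_univ T)
          (fun t _ ht => by simp [hd'supp t ht]),
        ← Finset.sum_attach T (fun t => if c t then d' t else 0), Finset.univ_eq_attach]
      exact Finset.sum_congr rfl fun t _ => by
        by_cases h : c ↑t
        · simp only [if_pos h, hd', dif_pos t.2, Subtype.coe_eta]
        · rw [if_neg h, if_neg h]
    have hvec : ∀ r, ∑ t : ↥T, M r t * d t = 0 := by
      intro r
      have := congrFun hd0 r
      simpa [Matrix.mulVecLin, Matrix.mulVec, dotProduct] using this
    have htot : ∑ t : ↥T, d t = 0 := by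
      have := hvec (Sum.inr ())
      simpa [hM] using this
    have hmarne : ∀ s x, x ≠ x₀ →
        ∑ t ∈ Finset.univ.filter (fun t : S → X => t s = x), d' t = 0 := by
      intro s x hx
      rw [key]
      have := hvec (Sum.inl (s, ⟨x, hx⟩))
      simpa [hM, ite_mul, Finset.sum_ite] using this
    have hmar : ∀ s x, ∑ t ∈ Finset.univ.filter (fun t : S → X => t s = x), d' t = 0 := by
      intro s x
      by_cases hx : x = x₀
      swap
      · exact hmarne s x hx
      subst hx
      have hfib : ∑ y : X, ∑ t ∈ Finset.univ.filter (fun t : S → X => t s = y), d' t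
          = ∑ t : S → X, d' t := Finset.sum_fiberwise _ _ _
      have htot' : ∑ t : S → X, d' t = 0 := by
        have := key (fun _ => True)
        simp only [Finset.filter_true, if_true] at this
        rw [this, htot]
      have hsingle := Finset.sum_eq_single (s := Finset.univ)
        (f := fun y => ∑ t ∈ Finset.univ.filter (fun t : S → X => t s = y), d' t) x
        (fun y _ hy => hmarne s y hy) (by simp)
      rw [← hsingle, hfib, htot']
    -- d' is nonzero
    obtain ⟨t₀, ht₀⟩ := Function.ne_iff.1 hdne
    have hd'ne : d' ↑t₀ ≠ 0 := by
      simp only [hd', dif_pos t₀.2, Subtype.coe_eta]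
      simpa using ht₀
    -- choose epsilon
    have hTne : T.Nonempty := Finset.card_pos.1 (by omega)
    set ε : ℝ := T.inf' hTne (fun t => p t / (|d' t| + 1)) with hε
    have habs : ∀ t : S → X, 0 < |d' t| + 1 := fun t => by positivity
    have hεpos : 0 < ε := by
      rw [hε, Finset.lt_inf'_iff]
      intro t ht
      have hpt : 0 < p t := lt_of_le_of_ne (hpnn t) (Ne.symm (by simpa [hT] using ht))
      exact div_pos hpt (habs t)
    have hb : ∀ t, ε * |d' t| ≤ p t := by
      intro t
      by_cases ht : t ∈ T
      · have h1 : ε ≤ p t / (|d' t| + 1) := Finset.inf'_le _ ht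
        have h2 : ε * (|d' t| + 1) ≤ p t := (le_div_iff₀ (habs t)).1 h1
        nlinarith [hεpos, abs_nonneg (d' t)]
      · rw [hd'supp t ht]
        simpa using hpnn t
    -- the two perturbed points
    set p₁ : (S → X) → ℝ := fun t => p t - ε * d' t with hp₁
    set p₂ : (S → X) → ℝ := fun t => p t + ε * d' t with hp₂
    have hp₁P : p₁ ∈ P := by
      constructor
      · intro t
        have := hb t
        have h3 : ε * d' t ≤ ε * |d' t| :=
          mul_le_mul_of_nonneg_left (le_abs_self _) hεpos.le
        simp only [hp₁]
        linarith
      · intro s x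
        have : ∑ t ∈ Finset.univ.filter (fun t : S → X => t s = x), p₁ t
            = (∑ t ∈ Finset.univ.filter (fun t : S → X => t s = x), p t)
              - ε * ∑ t ∈ Finset.univ.filter (fun t : S → X => t s = x), d' t := by
          rw [Finset.mul_sum, ← Finset.sum_sub_distrib]
        rw [this, hmar s x, hpP.2 s x, mul_zero, sub_zero]
    have hp₂P : p₂ ∈ P := by
      constructor
      · intro t
        have := hb t
        have h3 : ε * (-d' t) ≤ ε * |d' t| :=
          mul_le_mul_of_nonneg_left (neg_le_abs _) hεpos.le
        simp only [hp₂]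
        nlinarith
      · intro s x
        have : ∑ t ∈ Finset.univ.filter (fun t : S → X => t s = x), p₂ t
            = (∑ t ∈ Finset.univ.filter (fun t : S → X => t s = x), p t)
              + ε * ∑ t ∈ Finset.univ.filter (fun t : S → X => t s = x), d' t := by
          rw [Finset.mul_sum, ← Finset.sum_add_distrib]
        rw [this, hmar s x, hpP.2 s x, mul_zero, add_zero]
    have hseg : p ∈ openSegment ℝ p₁ p₂ := by
      refine ⟨1/2, 1/2, by norm_num, by norm_num, by norm_num, ?_⟩
      funext t
      simp only [hp₁, hp₂, Pi.add_apply, Pi.smul_apply, smul_eq_mul]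
      ring
    have hext := hp.2 hp₁P hp₂P hseg
    have := congrFun hext ↑t₀
    simp only [hp₁] at this
    have : ε * d' ↑t₀ = 0 := by linarith
    rcases mul_eq_zero.1 this with h | h
    · exact absurd h (ne_of_gt hεpos)
    · exact hd'ne h
end

section
/- For a state-dependent discrete memoryless channel with finite input alphabet X, finite state alphabet S, finite output alphabet Y, and transition probabilities p(y|x,s), with i.i.d. states known causally at the encoder, the Shannon capacity C = max_T I(T;Y) (where T ranges over distributions on X^S, the input alphabet of the associated channel) is achieved by a distribution on X^S whose support has size at most |X||S| - |S| + 1. -/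
open Finset

/-- Shannon entropy of a (sub)probability vector on a finite alphabet. -/
noncomputable def discEntropy {Y : Type*} [Fintype Y] (f : Y → ℝ) : ℝ :=
  ∑ y, Real.negMulLog (f y)

/-- Likelihood of the associated channel: output pmf given input `t : S → X`. -/
noncomputable def assocChan {X S Y : Type*} [Fintype S]
    (W : Y → X → S → ℝ) (pS : S → ℝ) (t : S → X) (y : Y) : ℝ :=
  ∑ s, pS s * W y (t s) s

/-- Mutual information `I(T;Y) = H(Y) - H(Y|T)` for input distribution `π` on `S → X`. -/
noncomputable def assocMI {X S Y : Type*} [Fintype X] [Fintype S] [Fintype Y]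
    [DecidableEq S] (W : Y → X → S → ℝ) (pS : S → ℝ) (π : (S → X) → ℝ) : ℝ :=
  discEntropy (fun y => ∑ t : S → X, π t * assocChan W pS t y) -
    ∑ t : S → X, π t * discEntropy (assocChan W pS t)

lemma lp_reduce {ι α : Type*} [Fintype ι] [DecidableEq ι] [Fintype α] [DecidableEq α]
    (A : ι → Option α → ℝ) (hA : ∀ i, A i none = 1) (c : ι → ℝ) :
    ∀ N (π : ι → ℝ), (∀ i, 0 ≤ π i) → (Finset.univ.filter (π · ≠ 0)).card ≤ N →
    ∃ π' : ι → ℝ, (∀ i, 0 ≤ π' i) ∧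
      (∀ o, ∑ i, π' i * A i o = ∑ i, π i * A i o) ∧
      (∑ i, π' i * c i ≤ ∑ i, π i * c i) ∧
      (Finset.univ.filter (π' · ≠ 0)).card ≤ Fintype.card α + 1 := by
  intro N
  induction N with
  | zero =>
    intro π h0 hc
    exact ⟨π, h0, fun _ => rfl, le_rfl, by omega⟩
  | succ N IH =>
    intro π h0 hcard
    by_cases hsmall : (Finset.univ.filter (π · ≠ 0)).card ≤ Fintype.card α + 1
    · exact ⟨π, h0, fun _ => rfl, le_rfl, hsmall⟩
    push_neg at hsmall
    set T := Finset.univ.filter (π · ≠ 0) with hT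
    -- the family A restricted to T is linearly dependent
    have hdep : ¬ LinearIndependent ℝ (fun i : T => A i.1) := by
      intro h
      have := h.fintype_card_le_finrank
      rw [Module.finrank_fintype_fun_eq_card, Fintype.card_coe,
        Fintype.card_option] at this
      omega
    obtain ⟨g, hg0, jg, hjg⟩ := Fintype.not_linearIndependent_iff.mp hdep
    set d : ι → ℝ := fun i => if h : i ∈ T then g ⟨i, h⟩ else 0 with hd
    have hdT : ∀ i, i ∉ T → d i = 0 := by
      intro i hi; simp [hd, hi]
    have hdA : ∀ o, ∑ i, d i * A i o = 0 := by
      intro o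
      have := congrFun hg0 o
      simp only [Finset.sum_apply, Pi.smul_apply, smul_eq_mul, Pi.zero_apply] at this
      rw [← Finset.sum_filter_of_ne (p := (· ∈ T)) (by
        intro i _ hne
        by_contra hiT
        exact hne (by simp [hdT i hiT]))]
      · rw [Finset.filter_mem_eq_inter, Finset.univ_inter,
          ← Finset.sum_attach T (fun i => d i * A i o)]
        rw [← this]
        apply Finset.sum_congr rfl
        intro i _
        simp [hd, i.2]
    have hdne : ∃ i, d i ≠ 0 := ⟨jg.1, by simpa [hd, jg.2] using hjg⟩
    -- choose sign so the cost direction is nonpositive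
    have main : ∀ e : ι → ℝ, (∀ o, ∑ i, e i * A i o = 0) → (∃ i, e i ≠ 0) →
        (∑ i, e i * c i ≤ 0) → (∀ i, i ∉ T → e i = 0) →
        ∃ π' : ι → ℝ, (∀ i, 0 ≤ π' i) ∧
          (∀ o, ∑ i, π' i * A i o = ∑ i, π i * A i o) ∧
          (∑ i, π' i * c i ≤ ∑ i, π i * c i) ∧
          (Finset.univ.filter (π' · ≠ 0)).card ≤ Fintype.card α + 1 := by
      intro e heA hene hec heT
      have hesum : ∑ i, e i = 0 := by
        have := heA none
        simpa [hA] using this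
      -- there is a negative coordinate
      have hneg : ∃ i, e i < 0 := by
        by_contra hno
        push_neg at hno
        obtain ⟨j, hj⟩ := hene
        have : ∀ i ∈ Finset.univ, e i = 0 :=
          (Finset.sum_eq_zero_iff_of_nonneg (fun i _ => hno i)).mp hesum
        exact hj (this j (Finset.mem_univ j))
      set Neg := Finset.univ.filter (fun i => e i < 0) with hNeg
      have hNegne : Neg.Nonempty := by
        obtain ⟨i, hi⟩ := hneg
        exact ⟨i, by simp [hNeg, hi]⟩
      set lam := Neg.inf' hNegne (fun i => π i / (-e i)) with hlam
      obtain ⟨j₀, hj₀Neg, hj₀⟩ := Finset.exists_mem_eq_inf' hNegne (fun i => π i / (-e i))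
      have hj₀neg : e j₀ < 0 := by simpa [hNeg] using hj₀Neg
      have hlam0 : 0 ≤ lam := by
        apply Finset.le_inf'
        intro i hi
        have : e i < 0 := by simpa [hNeg] using hi
        exact div_nonneg (h0 i) (by linarith)
      set π'' : ι → ℝ := fun i => π i + lam * e i with hπ''
      have hπ''0 : ∀ i, 0 ≤ π'' i := by
        intro i
        rcases le_or_gt 0 (e i) with h | h
        · have : 0 ≤ lam * e i := mul_nonneg hlam0 h
          simp only [hπ'']; linarith [h0 i]
        · have hle : lam ≤ π i / (-e i) := by
            rw [hlam]
            exact Finset.inf'_le _ (by simp [hNeg, h])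
          rw [le_div_iff₀ (by linarith)] at hle
          simp only [hπ'']; nlinarith
      have hπ''A : ∀ o, ∑ i, π'' i * A i o = ∑ i, π i * A i o := by
        intro o
        simp only [hπ'', add_mul, Finset.sum_add_distrib, mul_assoc, ← Finset.mul_sum,
          heA o, mul_zero, add_zero]
      have hπ''c : ∑ i, π'' i * c i ≤ ∑ i, π i * c i := by
        simp only [hπ'', add_mul, Finset.sum_add_distrib, mul_assoc, ← Finset.mul_sum]
        nlinarith [mul_nonpos_of_nonneg_of_nonpos hlam0 hec]
      have hj₀zero : π'' j₀ = 0 := by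
        have hne : e j₀ ≠ 0 := ne_of_lt hj₀neg
        simp only [hπ'', hlam, hj₀]
        have : π j₀ / -e j₀ * e j₀ = -π j₀ := by
          rw [div_mul_eq_mul_div, div_neg, mul_div_assoc, div_self hne]; ring
        linarith
      have hsub : Finset.univ.filter (π'' · ≠ 0) ⊆ T.erase j₀ := by
        intro i hi
        simp only [Finset.mem_filter, Finset.mem_univ, true_and] at hi
        rw [Finset.mem_erase]
        constructor
        · rintro rfl; exact hi hj₀zero
        · by_contra hiT
          exact hi (by simp [hπ'', heT i hiT, hdT, show π i = 0 by
            by_contra hπi; exact hiT (by simp [hT, hπi])])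
      have hj₀T : j₀ ∈ T := by
        by_contra h
        exact (ne_of_lt hj₀neg) (heT j₀ h)
      have hcard'' : (Finset.univ.filter (π'' · ≠ 0)).card ≤ N := by
        have h1 := Finset.card_le_card hsub
        have h2 : (T.erase j₀).card = T.card - 1 := Finset.card_erase_of_mem hj₀T
        have h3 : 1 ≤ T.card := Finset.card_pos.mpr ⟨j₀, hj₀T⟩
        omega
      obtain ⟨π', h1, h2, h3, h4⟩ := IH π'' hπ''0 hcard''
      exact ⟨π', h1, fun o => (h2 o).trans (hπ''A o), h3.trans hπ''c, h4⟩
    rcases le_or_gt (∑ i, d i * c i) 0 with h | h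
    · exact main d hdA hdne h hdT
    · refine main (fun i => -d i) ?_ ?_ ?_ ?_
      · intro o; simp only [neg_mul]; rw [Finset.sum_neg_distrib, hdA o, neg_zero]
      · obtain ⟨i, hi⟩ := hdne; exact ⟨i, by simpa using hi⟩
      · simp only [neg_mul]; rw [Finset.sum_neg_distrib]; linarith
      · intro i hi; simp [hdT i hi]

/-- For an SD-DMC with i.i.d. states known causally at the encoder, the
capacity `max_T I(T;Y)` of Shannon's associated channel (input alphabet `S → X`) is
achieved by an input distribution whose support has size at most
`|X||S| - |S| + 1`. -/
theorem stmt_1 {X S Y : Type*} [Fintype X] [Fintype S] [Fintype Y]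
    [DecidableEq S] [Nonempty X]
    (W : Y → X → S → ℝ) (hW0 : ∀ y x s, 0 ≤ W y x s) (hW1 : ∀ x s, ∑ y, W y x s = 1)
    (pS : S → ℝ) (hpS0 : ∀ s, 0 ≤ pS s) (hpS1 : ∑ s, pS s = 1) :
    ∃ π : (S → X) → ℝ, (∀ t, 0 ≤ π t) ∧ (∑ t, π t = 1) ∧
      (∀ π' : (S → X) → ℝ, (∀ t, 0 ≤ π' t) → (∑ t, π' t = 1) →
        assocMI W pS π' ≤ assocMI W pS π) ∧
      (Function.support π).ncard ≤
        Fintype.card X * Fintype.card S - Fintype.card S + 1 := by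
  classical
  -- continuity of the mutual information
  have hcont : Continuous (fun π : (S → X) → ℝ => assocMI W pS π) := by
    unfold assocMI discEntropy
    apply Continuous.sub
    · apply continuous_finset_sum
      intro y _
      exact Real.continuous_negMulLog.comp
        (continuous_finset_sum _ fun t _ => (continuous_apply t).mul continuous_const)
    · exact continuous_finset_sum _ fun t _ => (continuous_apply t).mul continuous_const
  -- the simplex is nonempty
  obtain ⟨t₀⟩ : Nonempty (S → X) := inferInstance
  have hΔne : (stdSimplex ℝ (S → X)).Nonempty := by
    refine ⟨fun t => if t = t₀ then 1 else 0, fun t => by positivity, by simp⟩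
  obtain ⟨π₀, hπ₀Δ, hmax⟩ :=
    (isCompact_stdSimplex ℝ (S → X)).exists_isMaxOn hΔne hcont.continuousOn
  obtain ⟨hπ₀0, hπ₀1⟩ := hπ₀Δ
  -- reduce the support
  set x₀ : X := Classical.arbitrary X with hx₀
  set A : (S → X) → Option ({x : X // x ≠ x₀} × S) → ℝ :=
    fun t o => Option.elim o 1 (fun p => if t p.2 = p.1.1 then 1 else 0) with hAdef
  set c : (S → X) → ℝ := fun t => discEntropy (assocChan W pS t) with hcdef
  obtain ⟨π, hπ0, hπA, hπc, hπcard⟩ :=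
    lp_reduce A (fun i => rfl) c (Finset.univ.filter (π₀ · ≠ 0)).card π₀ hπ₀0 le_rfl
  have hsum' : ∑ t, π t = ∑ t, π₀ t := by simpa [hAdef] using hπA none
  have hsum : ∑ t, π t = 1 := by rw [hsum', hπ₀1]
  have hmargs : ∀ (x : {x : X // x ≠ x₀}) (s : S),
      ∑ t, π t * (if t s = x.1 then 1 else 0)
        = ∑ t, π₀ t * (if t s = x.1 then 1 else 0) := by
    intro x s
    simpa [hAdef] using hπA (some (x, s))
  -- key pointwise decomposition
  have key : ∀ (ρ : (S → X) → ℝ) (s : S) (y : Y),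
      ∑ t, ρ t * W y (t s) s
        = (∑ t, ρ t) * W y x₀ s +
          ∑ x : {x : X // x ≠ x₀},
            (∑ t, ρ t * (if t s = x.1 then 1 else 0)) * (W y x.1 s - W y x₀ s) := by
    intro ρ s y
    have ptw : ∀ t : S → X, W y (t s) s
        = W y x₀ s + ∑ x : {x : X // x ≠ x₀},
            (if t s = x.1 then 1 else 0) * (W y x.1 s - W y x₀ s) := by
      intro t
      by_cases h : t s = x₀
      · rw [h, Finset.sum_eq_zero, add_zero]
        intro x _
        rw [if_neg, zero_mul]
        intro hc
        exact x.2 hc.symm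
      · rw [Finset.sum_eq_single (⟨t s, h⟩ : {x : X // x ≠ x₀})]
        · simp
        · intro x _ hx
          rw [if_neg, zero_mul]
          intro hc
          exact hx (Subtype.ext hc.symm)
        · intro h'
          exact absurd (Finset.mem_univ _) h'
    calc ∑ t, ρ t * W y (t s) s
        = ∑ t, (ρ t * W y x₀ s + ∑ x : {x : X // x ≠ x₀},
            (ρ t * (if t s = x.1 then 1 else 0)) * (W y x.1 s - W y x₀ s)) := by
          refine Finset.sum_congr rfl fun t _ => ?_
          rw [ptw t, mul_add, Finset.mul_sum]
          simp only [mul_assoc]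
      _ = (∑ t, ρ t) * W y x₀ s + ∑ x : {x : X // x ≠ x₀},
            (∑ t, ρ t * (if t s = x.1 then 1 else 0)) * (W y x.1 s - W y x₀ s) := by
          rw [Finset.sum_add_distrib, ← Finset.sum_mul, Finset.sum_comm]
          congr 1
          refine Finset.sum_congr rfl fun x _ => ?_
          rw [Finset.sum_mul]
  -- the mixture output distributions agree
  have hmix : ∀ y, (∑ t, π t * assocChan W pS t y) = ∑ t, π₀ t * assocChan W pS t y := by
    intro y
    unfold assocChan
    have swap : ∀ ρ : (S → X) → ℝ,
        ∑ t, ρ t * ∑ s, pS s * W y (t s) s = ∑ s, pS s * ∑ t, ρ t * W y (t s) s := by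
      intro ρ
      simp_rw [Finset.mul_sum]
      rw [Finset.sum_comm]
      exact Finset.sum_congr rfl fun s _ => Finset.sum_congr rfl fun t _ => by ring
    rw [swap, swap]
    refine Finset.sum_congr rfl fun s _ => ?_
    rw [key π s y, key π₀ s y, hsum']
    have hx : ∑ x : {x : X // x ≠ x₀},
          (∑ t, π t * (if t s = x.1 then 1 else 0)) * (W y x.1 s - W y x₀ s)
        = ∑ x : {x : X // x ≠ x₀},
          (∑ t, π₀ t * (if t s = x.1 then 1 else 0)) * (W y x.1 s - W y x₀ s) :=
      Finset.sum_congr rfl fun x _ => by rw [hmargs x s]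
    rw [hx]
  have hle : assocMI W pS π₀ ≤ assocMI W pS π := by
    unfold assocMI
    have h1 : (fun y => ∑ t, π t * assocChan W pS t y)
        = fun y => ∑ t, π₀ t * assocChan W pS t y := funext hmix
    rw [h1]
    exact sub_le_sub_left hπc _
  refine ⟨π, hπ0, hsum, ?_, ?_⟩
  · intro π' h0' h1'
    exact le_trans (hmax ⟨h0', h1'⟩) hle
  · have hsupp : Function.support π = ↑(Finset.univ.filter (π · ≠ 0)) := by
      ext t; simp [Function.mem_support]
    rw [hsupp, Set.ncard_coe_finset]
    have hcardα : Fintype.card ({x : X // x ≠ x₀} × S)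
        = (Fintype.card X - 1) * Fintype.card S := by
      rw [Fintype.card_prod, Fintype.card_subtype_compl, Fintype.card_subtype_eq]
    have hX1 : 1 ≤ Fintype.card X := Fintype.card_pos
    have : (Fintype.card X - 1) * Fintype.card S
        = Fintype.card X * Fintype.card S - Fintype.card S := by
      rw [Nat.sub_mul, one_mul]
    omega
end

section
/- Let x_1 < x_2 < ... < x_M be real numbers forming an arithmetic progression, and let s_1 < s_2 < ... < s_Q be arbitrary real numbers. Then there exist M functions f_1, ..., f_M from {1,...,Q} to {x_1,...,x_M} such that the M multisets {f_i(q) + s_q : q = 1,...,Q} (each of size Q, counted with multiplicity) are pairwise disjoint. -/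
open Finset

/-- If `x_1 < ... < x_M` form an arithmetic progression of reals and
`s_1 < ... < s_Q` are arbitrary reals, then there exist `M` functions
`f_1, ..., f_M : {1,...,Q} → {x_1,...,x_M}` whose output multisets
`{f_i(q) + s_q : q}` are pairwise disjoint. -/
theorem stmt_2 {M Q : ℕ} (x : Fin M → ℝ) (d : ℝ) (hd : 0 < d)
    (hAP : ∀ i j : Fin M, x j - x i = (((j : ℕ) : ℝ) - ((i : ℕ) : ℝ)) * d)
    (s : Fin Q → ℝ) (hs : StrictMono s) :
    ∃ f : Fin M → Fin Q → Fin M,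
      ∀ i j : Fin M, i ≠ j →
        Disjoint
          (Multiset.map (fun q => x (f i q) + s q) Finset.univ.val)
          (Multiset.map (fun q => x (f j q) + s q) Finset.univ.val) := by
  have hd' : d ≠ 0 := ne_of_gt hd
  -- the chosen index, as an integer mod M
  refine ⟨fun i q => ⟨(((i : ℕ) - ⌊s q / d⌋) % (M : ℤ)).toNat, ?_⟩, ?_⟩
  · have hM : (0:ℤ) < (M:ℤ) := by exact_mod_cast i.pos
    have h1 : (0:ℤ) ≤ (((i : ℕ) - ⌊s q / d⌋) % (M : ℤ)) :=
      Int.emod_nonneg _ (ne_of_gt hM)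
    have h2 := Int.emod_lt_of_pos ((i : ℕ) - ⌊s q / d⌋ : ℤ) hM
    omega
  · intro i j hij
    rw [Multiset.disjoint_left]
    intro a ha hb
    simp only [Multiset.mem_map, Finset.mem_val, Finset.mem_univ, true_and] at ha hb
    obtain ⟨q, hq⟩ := ha
    obtain ⟨q', hq'⟩ := hb
    have hM : (0:ℤ) < (M:ℤ) := by exact_mod_cast i.pos
    set nq : ℤ := ⌊s q / d⌋ with hnq
    set nq' : ℤ := ⌊s q' / d⌋ with hnq'
    set A : ℤ := ((i : ℕ) - nq) % (M : ℤ) + nq with hA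
    set B : ℤ := ((j : ℕ) - nq') % (M : ℤ) + nq' with hB
    have hz : (0:ℕ) < M := i.pos
    set z : Fin M := ⟨0, hz⟩ with hzdef
    -- express values
    have hxval : ∀ (k : Fin M) (r : Fin Q),
        x ⟨(((k : ℕ) - ⌊s r / d⌋) % (M : ℤ)).toNat, by
          have h1 : (0:ℤ) ≤ (((k : ℕ) - ⌊s r / d⌋) % (M : ℤ)) :=
            Int.emod_nonneg _ (ne_of_gt hM)
          have h2 := Int.emod_lt_of_pos ((k : ℕ) - ⌊s r / d⌋ : ℤ) hM
          omega⟩ + s r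
        = x z + (((((k : ℕ) : ℤ) - ⌊s r / d⌋) % (M : ℤ) + ⌊s r / d⌋ : ℤ) : ℝ) * d
          + Int.fract (s r / d) * d := by
      intro k r
      have h1 : (0:ℤ) ≤ (((k : ℕ) - ⌊s r / d⌋) % (M : ℤ)) :=
        Int.emod_nonneg _ (ne_of_gt hM)
      have hx := hAP z ⟨(((k : ℕ) - ⌊s r / d⌋) % (M : ℤ)).toNat, by
        have h2 := Int.emod_lt_of_pos ((k : ℕ) - ⌊s r / d⌋ : ℤ) hM
        omega⟩
      have hsr : s r = (⌊s r / d⌋ : ℝ) * d + Int.fract (s r / d) * d := by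
        rw [← add_mul, Int.floor_add_fract, div_mul_cancel₀ _ hd']
      have hcast : ((((((k : ℕ) : ℤ) - ⌊s r / d⌋) % (M : ℤ)).toNat : ℕ) : ℝ)
          = (((((k : ℕ) : ℤ) - ⌊s r / d⌋) % (M : ℤ) : ℤ) : ℝ) := by
        exact_mod_cast congrArg (fun n : ℤ => (n : ℝ)) (Int.toNat_of_nonneg h1)
      simp only [hzdef] at hx
      push_cast at hx ⊢
      rw [hcast] at hx
      linarith [hx, hsr]
    have hEq : x z + (A : ℝ) * d + Int.fract (s q / d) * d
        = x z + (B : ℝ) * d + Int.fract (s q' / d) * d := by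
      have h1 := hxval i q
      have h2 := hxval j q'
      rw [hA, hB]
      rw [hq] at h1; rw [hq'] at h2
      linarith [h1, h2]
    have hAB : A = B := by
      have hfr1 : 0 ≤ Int.fract (s q / d) := Int.fract_nonneg _
      have hfr2 : Int.fract (s q / d) < 1 := Int.fract_lt_one _
      have hfr3 : 0 ≤ Int.fract (s q' / d) := Int.fract_nonneg _
      have hfr4 : Int.fract (s q' / d) < 1 := Int.fract_lt_one _
      have hdiff : ((A : ℝ) - B) * d = (Int.fract (s q' / d) - Int.fract (s q / d)) * d := by
        linear_combination hEq
      have h5 : (A : ℝ) - B = Int.fract (s q' / d) - Int.fract (s q / d) :=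
        mul_right_cancel₀ hd' hdiff
      have h6 : ((A - B : ℤ) : ℝ) < 1 := by push_cast; linarith
      have h7 : (-1 : ℝ) < ((A - B : ℤ) : ℝ) := by push_cast; linarith
      have h8 : (A - B : ℤ) < 1 := by exact_mod_cast h6
      have h9 : (-1 : ℤ) < (A - B : ℤ) := by exact_mod_cast h7
      omega
    -- A ≡ i, B ≡ j mod M
    have hAi : A % (M : ℤ) = (i : ℕ) % (M : ℤ) := by
      rw [hA, Int.emod_add_emod, sub_add_cancel]
    have hBj : B % (M : ℤ) = (j : ℕ) % (M : ℤ) := by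
      rw [hB, Int.emod_add_emod, sub_add_cancel]
    have hiM : ((i : ℕ) : ℤ) % (M : ℤ) = (i : ℕ) :=
      Int.emod_eq_of_lt (by positivity) (by exact_mod_cast i.isLt)
    have hjM : ((j : ℕ) : ℤ) % (M : ℤ) = (j : ℕ) :=
      Int.emod_eq_of_lt (by positivity) (by exact_mod_cast j.isLt)
    apply hij
    apply Fin.ext
    have : ((i : ℕ) : ℤ) = ((j : ℕ) : ℤ) := by
      rw [← hiM, ← hjM, ← hAi, ← hBj, hAB]
    exact_mod_cast this
end

section
/- Let x_1 < ... < x_M form an arithmetic progression of reals and s_1 < ... < s_Q be reals. The M pairwise-disjoint multisets in the previous construction can be chosen so that for each q in {1,...,Q}, the values f_1(q), f_2(q), ..., f_M(q) are a permutation of x_1, ..., x_M. -/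
open Finset

/-- The `M` pairwise-disjoint output multisets of Statement 2 can be
chosen so that, for each fixed `q`, the values `f_1(q), ..., f_M(q)` form a
permutation of `x_1, ..., x_M` (i.e. `i ↦ f i q` is a bijection). -/
theorem stmt_3 {M Q : ℕ} (x : Fin M → ℝ) (d : ℝ) (hd : 0 < d)
    (hAP : ∀ i j : Fin M, x j - x i = (((j : ℕ) : ℝ) - ((i : ℕ) : ℝ)) * d)
    (s : Fin Q → ℝ) (hs : StrictMono s) :
    ∃ f : Fin M → Fin Q → Fin M,
      (∀ i j : Fin M, i ≠ j →
        Disjoint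
          (Multiset.map (fun q => x (f i q) + s q) Finset.univ.val)
          (Multiset.map (fun q => x (f j q) + s q) Finset.univ.val)) ∧
      (∀ q : Fin Q, Function.Bijective (fun i : Fin M => f i q)) := by
  set g : Fin Q → ℤ := fun q => ⌊s q / d⌋ with hg
  have hMpos : ∀ _ : Fin M, (0:ℤ) < (M:ℤ) := fun i => by exact_mod_cast i.pos
  set f : Fin M → Fin Q → Fin M := fun i q =>
    ⟨(((i:ℤ) - g q) % (M:ℤ)).toNat, by
      have h1 := Int.emod_nonneg ((i:ℤ) - g q) (hMpos i).ne'
      have h2 := Int.emod_lt_of_pos ((i:ℤ) - g q) (hMpos i)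
      omega⟩ with hf
  have hfval : ∀ (i : Fin M) (q : Fin Q), ((f i q : ℕ) : ℤ) = ((i:ℤ) - g q) % (M:ℤ) := by
    intro i q
    have h1 := Int.emod_nonneg ((i:ℤ) - g q) (hMpos i).ne'
    simp [hf]
    omega
  have hmod : ∀ (i : Fin M) (q : Fin Q), ((f i q : ℕ) + g q) % (M:ℤ) = (i:ℤ) % (M:ℤ) := by
    intro i q
    calc ((f i q : ℕ) + g q) % (M:ℤ)
        = (((i:ℤ) - g q) % (M:ℤ) + g q) % (M:ℤ) := by rw [hfval]
      _ = (((i:ℤ) - g q) + g q) % (M:ℤ) :=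
          Int.ModEq.add_right _ (Int.emod_emod_of_dvd _ dvd_rfl)
      _ = (i:ℤ) % (M:ℤ) := by ring_nf
  have hself : ∀ i : Fin M, (i:ℤ) % (M:ℤ) = (i:ℤ) := fun i =>
    Int.emod_eq_of_lt (by positivity) (by exact_mod_cast i.isLt)
  have key : ∀ (i j : Fin M) (q q' : Fin Q),
      x (f i q) + s q = x (f j q') + s q' → i = j := by
    intro i j q q' heq
    have hx : x (f i q) - x (f j q') = s q' - s q := by linarith
    have hap := hAP (f j q') (f i q)
    rw [hap] at hx
    set a : ℤ := (f i q : ℕ) + g q with ha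
    set b : ℤ := (f j q' : ℕ) + g q' with hb
    have hr : ∀ q : Fin Q, 0 ≤ s q - d * (g q : ℝ) ∧ s q - d * (g q : ℝ) < d := by
      intro q
      have h1 : ((g q : ℤ) : ℝ) ≤ s q / d := Int.floor_le _
      have h2 : s q / d < (g q : ℝ) + 1 := Int.lt_floor_add_one _
      constructor
      · nlinarith [(le_div_iff₀ hd).mp h1]
      · nlinarith [(div_lt_iff₀ hd).mp h2]
    have hab : ((a : ℝ) - (b : ℝ)) * d = (s q' - d * (g q' : ℝ)) - (s q - d * (g q : ℝ)) := by
      push_cast [ha, hb]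
      nlinarith [hx]
    have habs : |((a : ℝ) - b)| * d < d := by
      rcases hr q with ⟨h1, h2⟩
      rcases hr q' with ⟨h3, h4⟩
      rcases abs_cases ((a:ℝ) - b) with ⟨he, _⟩ | ⟨he, _⟩ <;> rw [he] <;> nlinarith
    have hab1 : |(a - b : ℤ)| < 1 := by
      have h5 : |((a:ℝ) - b)| < 1 := by
        nlinarith [abs_nonneg ((a:ℝ) - b)]
      have h6 : |((a - b : ℤ) : ℝ)| < 1 := by push_cast; exact h5
      exact_mod_cast h6
    have hab0 : a = b := by
      have := abs_lt.mp hab1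
      omega
    have hij : (i:ℤ) % (M:ℤ) = (j:ℤ) % (M:ℤ) := by
      rw [← hmod i q, ← hmod j q', ← ha, ← hb, hab0]
    rw [hself i, hself j] at hij
    exact Fin.ext (by exact_mod_cast hij)
  refine ⟨f, ?_, ?_⟩
  · intro i j hij
    rw [Multiset.disjoint_left]
    intro a ha hb
    simp only [Multiset.mem_map, Finset.mem_val] at ha hb
    obtain ⟨q, -, rfl⟩ := ha
    obtain ⟨q', -, hq'⟩ := hb
    exact hij (key i j q q' hq'.symm)
  · intro q
    rw [Fintype.bijective_iff_injective_and_card]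
    refine ⟨fun i j hij => ?_, rfl⟩
    have hiv : ((f i q : ℕ) : ℤ) = ((f j q : ℕ) : ℤ) := by
      exact_mod_cast congrArg (fun z : Fin M => ((z : ℕ) : ℤ)) hij
    have h1 := hmod i q
    have h2 := hmod j q
    rw [hiv] at h1
    rw [h2, hself i, hself j] at h1
    exact Fin.ext (by exact_mod_cast h1.symm)
end

section
/- Consider the noise-free channel Y = X + S with input alphabet X = {x_1,...,x_M} ⊂ ℝ whose elements form an arithmetic progression, and interference alphabet S = {s_1,...,s_Q} ⊂ ℝ with i.i.d. interference known causally at the encoder. Then M distinct messages can be transmitted with zero error in a single channel use; i.e., there exist M functions f_1,...,f_M : S → X such that the decoder can recover i from any value f_i(s) + s, s ∈ S. -/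
/-- For the noise-free channel `Y = X + S` with input alphabet an
arithmetic progression `x_1 < ... < x_M` and interference alphabet
`s_1 < ... < s_Q` known causally at the encoder, `M` messages can be sent with
zero error in one channel use: there are encoding functions `f_i` such that the
message `i` is recoverable from any output `x_{f_i(q)} + s_q`. -/
theorem stmt_4 {M Q : ℕ} (x : Fin M → ℝ) (d : ℝ) (hd : 0 < d)
    (hAP : ∀ i j : Fin M, x j - x i = (((j : ℕ) : ℝ) - ((i : ℕ) : ℝ)) * d)
    (s : Fin Q → ℝ) (hs : StrictMono s) :
    ∃ f : Fin M → Fin Q → Fin M,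
      ∀ i j : Fin M, ∀ q q' : Fin Q,
        x (f i q) + s q = x (f j q') + s q' → i = j := by
  refine ⟨fun i q => ⟨(((i : ℤ) - ⌊s q / d⌋) % (M : ℤ)).toNat, ?_⟩, ?_⟩
  · have hM : 0 < (M : ℤ) := by exact_mod_cast i.pos
    have h1 := Int.emod_nonneg ((i : ℤ) - ⌊s q / d⌋) (by omega : (M : ℤ) ≠ 0)
    have h2 := Int.emod_lt_of_pos ((i : ℤ) - ⌊s q / d⌋) hM
    omega
  · intro i j q q' h
    set f : Fin M → Fin Q → ℤ := fun i q => ((i : ℤ) - ⌊s q / d⌋) % (M : ℤ) with hf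
    have hM : 0 < (M : ℤ) := by exact_mod_cast i.pos
    have hnn : ∀ i q, 0 ≤ f i q := fun i q =>
      Int.emod_nonneg _ (by omega : (M : ℤ) ≠ 0)
    -- turn the equality into equality of reals (f i q) + s q / d = ...
    have key : (f i q : ℝ) + s q / d = (f j q' : ℝ) + s q' / d := by
      have hlt1 : f i q < (M : ℤ) := Int.emod_lt_of_pos _ hM
      have hlt2 : f j q' < (M : ℤ) := Int.emod_lt_of_pos _ hM
      have h1 := hAP i ⟨(f i q).toNat, by have := hnn i q; omega⟩
      have h2 := hAP j ⟨(f j q').toNat, by have := hnn j q'; omega⟩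
      simp only [Fin.val_mk] at h1 h2
      have e1 : ((f i q).toNat : ℝ) = (f i q : ℝ) := by
        exact_mod_cast congrArg (Int.cast : ℤ → ℝ) (Int.toNat_of_nonneg (hnn i q))
      have e2 : ((f j q').toNat : ℝ) = (f j q' : ℝ) := by
        exact_mod_cast congrArg (Int.cast : ℤ → ℝ) (Int.toNat_of_nonneg (hnn j q'))
      rw [e1] at h1; rw [e2] at h2
      have hx : x ⟨(f i q).toNat, _⟩ + s q = x ⟨(f j q').toNat, _⟩ + s q' := h
      have hd' : d ≠ 0 := ne_of_gt hd
      have h3 := hAP i j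
      field_simp
      nlinarith [hx, h1, h2, h3]
    -- take floors
    have hfl : f i q + ⌊s q / d⌋ = f j q' + ⌊s q' / d⌋ := by
      have := congrArg Int.floor key
      rw [add_comm ((f i q : ℤ) : ℝ), add_comm ((f j q' : ℤ) : ℝ),
        Int.floor_add_intCast, Int.floor_add_intCast] at this
      omega
    -- conclude mod M
    have hi : (i : ℤ) % (M : ℤ) = (f i q + ⌊s q / d⌋) % (M : ℤ) := by
      simp only [hf]; rw [Int.emod_add_emod, sub_add_cancel]
    have hj : (j : ℤ) % (M : ℤ) = (f j q' + ⌊s q' / d⌋) % (M : ℤ) := by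
      simp only [hf]; rw [Int.emod_add_emod, sub_add_cancel]
    have hiM : (i : ℤ) < M := by exact_mod_cast i.isLt
    have hjM : (j : ℤ) < M := by exact_mod_cast j.isLt
    have : (i : ℤ) = (j : ℤ) := by
      have ei : (i : ℤ) % (M : ℤ) = (i : ℤ) :=
        Int.emod_eq_of_lt (Int.ofNat_nonneg _) hiM
      have ej : (j : ℤ) % (M : ℤ) = (j : ℤ) :=
        Int.emod_eq_of_lt (Int.ofNat_nonneg _) hjM
      rw [← ei, ← ej, hi, hj, hfl]
    exact Fin.ext (by exact_mod_cast this)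
end

section
/- For Q = 2 interference levels, M zero-error one-shot codes exist without any arithmetic-progression assumption: for any reals x_1 < ... < x_M and any two reals s_1 < s_2, there exist M functions f_1,...,f_M : {1,2} → {x_1,...,x_M} such that the multisets {f_i(1)+s_1, f_i(2)+s_2} for i = 1,...,M are pairwise disjoint. -/
/-- For `Q = 2` interference levels, zero-error one-shot codes of `M`
messages exist without any arithmetic-progression assumption: for any
`x_1 < ... < x_M` and `s_1 < s_2` there are `M` functions `f_i : {1,2} → X` whose
output multisets `{f_i(1)+s_1, f_i(2)+s_2}` are pairwise disjoint. -/
theorem stmt_5 {M : ℕ} (x : Fin M → ℝ) (hx : StrictMono x)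
    (s : Fin 2 → ℝ) (hs : s 0 < s 1) :
    ∃ f : Fin M → Fin 2 → Fin M,
      ∀ i j : Fin M, i ≠ j →
        Disjoint
          ({x (f i 0) + s 0, x (f i 1) + s 1} : Multiset ℝ)
          ({x (f j 0) + s 0, x (f j 1) + s 1} : Multiset ℝ) := by
  classical
  have hxinj : Function.Injective x := hx.injective
  set d : ℝ := s 1 - s 0 with hd
  set P : Fin M → Prop := fun j => ∃ k, x k = x j - d with hP
  set S : Finset (Fin M) := Finset.univ.filter P with hS
  set T : Finset (Fin M) := Finset.univ.filter (fun k => ¬ ∃ i, x i = x k + d) with hT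
  have hmemS : ∀ j, j ∈ S ↔ P j := by intro j; simp [hS]
  have hmemT : ∀ k, k ∈ T ↔ ¬ ∃ i, x i = x k + d := by intro k; simp [hT]
  have h1 : S.card = Tᶜ.card := by
    apply Finset.card_bij (fun j hj => ((hmemS j).mp hj).choose)
    · intro j hj
      have hspec := ((hmemS j).mp hj).choose_spec
      simp only [Finset.mem_compl, hmemT, not_not]
      exact ⟨j, by rw [hspec]; ring⟩
    · intro j1 h1 j2 h2 heq
      have s1 := ((hmemS j1).mp h1).choose_spec
      have s2 := ((hmemS j2).mp h2).choose_spec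
      have : x j1 - d = x j2 - d := by rw [← s1, ← s2, heq]
      exact hxinj (by linarith)
    · intro k hk
      simp only [Finset.mem_compl, hmemT, not_not] at hk
      obtain ⟨i, hi⟩ := hk
      have hPi : P i := ⟨k, by rw [hi]; ring⟩
      refine ⟨i, (hmemS i).mpr hPi, ?_⟩
      have hspec := ((hmemS i).mp ((hmemS i).mpr hPi)).choose_spec
      apply hxinj
      rw [hspec, hi]; ring
  have hcard : Sᶜ.card = T.card := by
    have c1 := Finset.card_compl S
    have c2 := Finset.card_compl T
    have hST : S.card + T.card = Fintype.card (Fin M) := by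
      have := Finset.card_compl Tᶜ
      rw [compl_compl] at this
      omega
    omega
  let e : (Sᶜ : Finset (Fin M)) ≃ (T : Finset (Fin M)) := Finset.equivOfCardEq hcard
  let σ : Fin M → Fin M := fun j =>
    if h : P j then h.choose
    else (e ⟨j, by simp [Finset.mem_compl, hmemS, h]⟩ : Fin M)
  -- key property: x i = x (σ j) + d → i = j
  have key : ∀ i j : Fin M, x i = x (σ j) + d → i = j := by
    intro i j hij
    by_cases h : P j
    · have hspec := h.choose_spec
      have : σ j = h.choose := by simp [σ, h]
      rw [this, hspec] at hij
      exact hxinj (by linarith)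
    · exfalso
      have hmem : (e ⟨j, by simp [Finset.mem_compl, hmemS, h]⟩ : Fin M) ∈ T :=
        (e ⟨j, by simp [Finset.mem_compl, hmemS, h]⟩).2
      have hσ : σ j = (e ⟨j, by simp [Finset.mem_compl, hmemS, h]⟩ : Fin M) := by
        simp [σ, h]
      rw [hmemT] at hmem
      exact hmem ⟨i, by rw [← hσ]; exact hij⟩
  -- σ is injective
  have hσinj : Function.Injective σ := by
    intro j1 j2 heq
    by_cases h1' : P j1 <;> by_cases h2' : P j2
    · have s1 := h1'.choose_spec
      have s2 := h2'.choose_spec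
      have e1 : σ j1 = h1'.choose := by simp [σ, h1']
      have e2 : σ j2 = h2'.choose := by simp [σ, h2']
      rw [e1, e2] at heq
      have : x j1 - d = x j2 - d := by rw [← s1, ← s2, heq]
      exact hxinj (by linarith)
    · exfalso
      have e2 : σ j2 = (e ⟨j2, by simp [Finset.mem_compl, hmemS, h2']⟩ : Fin M) := by
        simp [σ, h2']
      have hmem : σ j2 ∈ T := by rw [e2]; exact (e ⟨j2, _⟩).2
      rw [hmemT] at hmem
      have e1 : σ j1 = h1'.choose := by simp [σ, h1']
      have s1 := h1'.choose_spec
      exact hmem ⟨j1, by rw [← heq, e1, s1]; ring⟩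
    · exfalso
      have e1 : σ j1 = (e ⟨j1, by simp [Finset.mem_compl, hmemS, h1']⟩ : Fin M) := by
        simp [σ, h1']
      have hmem : σ j1 ∈ T := by rw [e1]; exact (e ⟨j1, _⟩).2
      rw [hmemT] at hmem
      have e2 : σ j2 = h2'.choose := by simp [σ, h2']
      have s2 := h2'.choose_spec
      exact hmem ⟨j2, by rw [heq, e2, s2]; ring⟩
    · have e1 : σ j1 = (e ⟨j1, by simp [Finset.mem_compl, hmemS, h1']⟩ : Fin M) := by
        simp [σ, h1']
      have e2 : σ j2 = (e ⟨j2, by simp [Finset.mem_compl, hmemS, h2']⟩ : Fin M) := by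
        simp [σ, h2']
      rw [e1, e2] at heq
      have := e.injective (Subtype.ext heq)
      exact Subtype.ext_iff.mp this
  refine ⟨fun i => ![i, σ i], ?_⟩
  intro i j hij
  rw [Multiset.disjoint_left]
  intro a ha hb
  simp only [Matrix.cons_val_zero, Matrix.cons_val_one, Matrix.head_cons,
    Multiset.insert_eq_cons, Multiset.mem_cons, Multiset.mem_singleton] at ha hb
  have hs10 : s 1 = s 0 + d := by rw [hd]; ring
  rcases ha with ha | ha <;> rcases hb with hb | hb <;>
      (have h := ha.symm.trans hb)
  · exact hij (hxinj (by linarith))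
  · have : x i = x (σ j) + d := by rw [hs10] at h; linarith
    exact hij (key i j this)
  · have : x j = x (σ i) + d := by rw [hs10] at h; linarith
    exact hij (key j i this).symm
  · have : x (σ i) = x (σ j) := by linarith
    exact hij (hσinj (hxinj this))
end

section
/- Let A be the MQ × M^Q zero-one matrix whose rows are indexed by pairs (q, i) ∈ {1,...,Q} × {1,...,M} and columns by tuples t ∈ {1,...,M}^Q, with A[(q,i), t] = 1 iff t(q) = i. Then the rank of A is MQ - Q + 1. -/
open Finset Submodule

/-- The `MQ × M^Q` zero-one matrix `A` with rows indexed by pairs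
`(q,i)` and columns by tuples `t : Fin Q → Fin M`, where `A[(q,i),t] = 1` iff
`t q = i`, has rank `MQ - Q + 1`. -/
theorem stmt_11 {M Q : ℕ} (hM : 0 < M) (hQ : 0 < Q) :
    (Matrix.of (fun (r : Fin Q × Fin M) (t : Fin Q → Fin M) =>
      if t r.1 = r.2 then (1 : ℝ) else 0)).rank = M * Q - Q + 1 := by
  classical
  haveI : NeZero M := ⟨hM.ne'⟩
  set A : Matrix (Fin Q × Fin M) (Fin Q → Fin M) ℝ :=
    Matrix.of (fun (r : Fin Q × Fin M) (t : Fin Q → Fin M) =>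
      if t r.1 = r.2 then (1 : ℝ) else 0) with hA
  rw [Matrix.rank_eq_finrank_span_row]
  set b : (Unit ⊕ (Fin Q × {i : Fin M // i ≠ 0})) → ((Fin Q → Fin M) → ℝ) :=
    Sum.elim (fun _ _ => 1) (fun p => A (p.1, p.2.1)) with hb
  have q0 : Fin Q := ⟨0, hQ⟩
  have hsum : ∀ (q : Fin Q) (t : Fin Q → Fin M),
      (∑ i : Fin M, A (q, i) t) = 1 := by
    intro q t
    simp [hA, Finset.sum_ite_eq]
  have hspan : span ℝ (Set.range b) = span ℝ (Set.range A) := by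
    apply le_antisymm
    · rw [span_le]
      rintro x ⟨j, rfl⟩
      match j with
      | Sum.inl _ =>
        have he : b (Sum.inl ()) = ∑ i : Fin M, A (q0, i) := by
          funext t
          simpa [hb] using (hsum q0 t).symm
        rw [show b (Sum.inl ()) = ∑ i : Fin M, A (q0, i) from he]
        exact sum_mem (fun i _ => subset_span ⟨(q0, i), rfl⟩)
      | Sum.inr (q, i) =>
        exact subset_span ⟨(q, i.1), rfl⟩
    · rw [span_le]
      rintro x ⟨⟨q, i⟩, rfl⟩
      by_cases hi : i = 0
      · subst hi
        have key : A (q, (0 : Fin M)) =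
            b (Sum.inl ()) - ∑ j : {i : Fin M // i ≠ 0}, b (Sum.inr (q, j)) := by
          funext t
          have h1 : (∑ j : {i : Fin M // i ≠ 0}, A (q, j.1) t)
              = ∑ i ∈ Finset.univ.erase (0 : Fin M), A (q, i) t := by
            rw [Finset.sum_subtype (p := fun i : Fin M => i ≠ 0)
              (Finset.univ.erase (0 : Fin M)) (fun x => by simp) (fun i => A (q, i) t)]
          have h2 : (∑ i ∈ Finset.univ.erase (0 : Fin M), A (q, i) t)
              = (∑ i : Fin M, A (q, i) t) - A (q, 0) t :=
            Finset.sum_erase_eq_sub (Finset.mem_univ _)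
          simp only [hb, Pi.sub_apply, Finset.sum_apply, Sum.elim_inl, Sum.elim_inr]
          rw [h1, h2, hsum q t]
          ring
        rw [key]
        exact Submodule.sub_mem _ (subset_span ⟨Sum.inl (), rfl⟩)
          (sum_mem (fun j _ => subset_span ⟨Sum.inr (q, j), rfl⟩))
      · exact subset_span ⟨Sum.inr (q, ⟨i, hi⟩), rfl⟩
  have hind : LinearIndependent ℝ b := by
    rw [Fintype.linearIndependent_iff]
    intro c hc
    have heval : ∀ t : Fin Q → Fin M,
        (∑ x : Unit, c (Sum.inl x) * b (Sum.inl x) t)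
          + ∑ p : Fin Q × {i : Fin M // i ≠ 0},
              c (Sum.inr p) * b (Sum.inr p) t = 0 := by
      intro t
      have h := congrFun hc t
      simpa [Finset.sum_apply, Fintype.sum_sum_type] using h
    have h0 : c (Sum.inl ()) = 0 := by
      have h := heval (fun _ => 0)
      simp only [hb, Sum.elim_inl, Sum.elim_inr, hA, Matrix.of_apply] at h
      have hz : ∀ p : Fin Q × {i : Fin M // i ≠ 0},
          ((if (0 : Fin M) = p.2.1 then (1:ℝ) else 0)) = 0 := by
        intro p; simp [(Ne.symm p.2.2 : (0:Fin M) ≠ p.2.1)]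
      simpa [hz] using h
    intro j
    match j with
    | Sum.inl _ => exact h0
    | Sum.inr (q, i) =>
      have h := heval (Function.update (fun _ => 0) q i.1)
      rw [Finset.sum_eq_single (q, i)] at h
      · simp only [hb, Sum.elim_inl, Sum.elim_inr, hA, Matrix.of_apply,
          Function.update_self, if_pos rfl, mul_one] at h
        simpa [h0] using h
      · rintro ⟨q', i'⟩ _ hne
        simp only [hb, Sum.elim_inr, hA, Matrix.of_apply]
        rcases eq_or_ne q' q with rfl | hq
        · rw [Function.update_self]
          have hii : ¬ (i.1 = i'.1) := by
            intro h'; exact hne (by simp [Prod.ext_iff, Subtype.ext_iff, h'.symm])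
          simp [hii]
        · rw [Function.update_of_ne hq]
          simp [(Ne.symm i'.2 : (0:Fin M) ≠ i'.1)]
      · simp
  rw [show A.row = A from rfl, hspan.symm, ← Set.finrank, ← linearIndependent_iff_card_eq_finrank_span.mp hind]
  have hcard : Fintype.card (Unit ⊕ (Fin Q × {i : Fin M // i ≠ 0})) = 1 + Q * (M - 1) := by
    simp [Fintype.card_subtype_compl]
  rw [hcard]
  obtain ⟨m, rfl⟩ : ∃ m, M = m + 1 := ⟨M - 1, by omega⟩
  simp only [Nat.add_sub_cancel]
  rw [add_mul, one_mul, Nat.add_sub_cancel, mul_comm, Nat.add_comm]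
end

section
/- In the inductive construction of disjoint multisets for the noise-free channel: let s_1 < ... < s_{q+1} be reals and x_1 < ... < x_M an arithmetic progression, with Y^{(j)} = {x_1 + s_j, ..., x_M + s_j}. If some element of Y^{(q+1)} lies in Y^{(1)} ∪ ... ∪ Y^{(q)}, and x_k + s_{q+1} is the largest such element, then there exists a unique j ∈ {1,...,q} such that {x_1 + s_{q+1}, ..., x_k + s_{q+1}} ⊆ Y^{(j)}. -/
/-- Inductive step of the disjoint-multiset construction. With
`x_1 < ... < x_M` an arithmetic progression, `s : Fin (Q+1) → ℝ` strictly
increasing, and `Y^{(j)} = {x_i + s j}`, if some element of `Y^{(Q+1)}` lies in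
`Y^{(1)} ∪ ... ∪ Y^{(Q)}` and `x_k + s_{Q+1}` is the largest such element, then
there is a unique `j ≤ Q` with `{x_1 + s_{Q+1}, ..., x_k + s_{Q+1}} ⊆ Y^{(j)}`. -/
theorem stmt_15 {M Q : ℕ} (x : Fin M → ℝ) (d : ℝ) (hd : 0 < d)
    (hAP : ∀ i j : Fin M, x j - x i = (((j : ℕ) : ℝ) - ((i : ℕ) : ℝ)) * d)
    (s : Fin (Q + 1) → ℝ) (hs : StrictMono s)
    (k : Fin M)
    (hmem : x k + s (Fin.last Q) ∈
      ⋃ j : Fin Q, Set.range (fun i : Fin M => x i + s j.castSucc))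
    (hmax : ∀ i : Fin M,
      (x i + s (Fin.last Q) ∈
        ⋃ j : Fin Q, Set.range (fun i' : Fin M => x i' + s j.castSucc)) → i ≤ k) :
    ∃! j : Fin Q, ∀ i : Fin M, i ≤ k →
      x i + s (Fin.last Q) ∈ Set.range (fun i' : Fin M => x i' + s j.castSucc) := by
  obtain ⟨j, m, hm⟩ := Set.mem_iUnion.mp hmem
  have hm : x m + s j.castSucc = x k + s (Fin.last Q) := hm
  -- any witness index must be strictly larger than k
  have hwit : ∀ (a : Fin Q) (n : Fin M),
      x n + s a.castSucc = x k + s (Fin.last Q) → (k : ℕ) < (n : ℕ) := by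
    intro a n h
    have hsa : s a.castSucc < s (Fin.last Q) := hs (Fin.castSucc_lt_last a)
    have h2 := hAP n k
    by_contra hle
    push_neg at hle
    have hle' : ((n : ℕ) : ℝ) ≤ ((k : ℕ) : ℝ) := by exact_mod_cast hle
    nlinarith
  -- any witness with room above leads to contradiction with maximality
  have hcontra : ∀ (a : Fin Q) (n : Fin M),
      x n + s a.castSucc = x k + s (Fin.last Q) → (n : ℕ) + 1 < M → False := by
    intro a n h hn
    have hk1 : (k : ℕ) + 1 < M := by have := hwit a n h; omega
    have hmem' : x ⟨(k : ℕ) + 1, hk1⟩ + s (Fin.last Q) ∈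
        ⋃ j : Fin Q, Set.range (fun i' : Fin M => x i' + s j.castSucc) := by
      refine Set.mem_iUnion.mpr ⟨a, ⟨(⟨(n : ℕ) + 1, hn⟩ : Fin M), ?_⟩⟩
      have h1 := hAP n ⟨(n : ℕ) + 1, hn⟩
      have h2 := hAP k ⟨(k : ℕ) + 1, hk1⟩
      push_cast at h1 h2
      simp only at h1 h2 ⊢
      linarith
    have hle := hmax _ hmem'
    have : (k : ℕ) + 1 ≤ (k : ℕ) := hle
    omega
  have hkm := hwit j m hm
  refine ⟨j, ?_, ?_⟩
  · -- existence: the whole prefix is covered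
    intro i hi
    have hik : (i : ℕ) ≤ (k : ℕ) := hi
    have hlt : (m : ℕ) - ((k : ℕ) - (i : ℕ)) < M := by have := m.isLt; omega
    refine ⟨⟨(m : ℕ) - ((k : ℕ) - (i : ℕ)), hlt⟩, ?_⟩
    have h1 := hAP i ⟨(m : ℕ) - ((k : ℕ) - (i : ℕ)), hlt⟩
    have h2 := hAP k m
    have hc : (((m : ℕ) - ((k : ℕ) - (i : ℕ)) : ℕ) : ℝ)
        = ((m : ℕ) : ℝ) - ((k : ℕ) : ℝ) + ((i : ℕ) : ℝ) := by
      have : ((m : ℕ) - ((k : ℕ) - (i : ℕ))) + (k : ℕ) = (m : ℕ) + (i : ℕ) := by omega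
      have := congrArg (fun t : ℕ => (t : ℝ)) this
      push_cast at this
      linarith
    simp only at h1 ⊢
    rw [hc] at h1
    linarith [hm]
  · -- uniqueness
    intro j' hj'
    obtain ⟨m', hm'⟩ := hj' k le_rfl
    have hm' : x m' + s j'.castSucc = x k + s (Fin.last Q) := hm'
    rcases lt_trichotomy ((m : ℕ)) ((m' : ℕ)) with hlt | heq | hgt
    · exact absurd (hcontra j m hm (by have := m'.isLt; omega)) (fun h => h)
    · have hmm' : m = m' := Fin.ext heq
      have : s j.castSucc = s j'.castSucc := by
        rw [hmm'] at hm; linarith [hm, hm']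
      have := hs.injective this
      exact (Fin.castSucc_injective _ this).symm
    · exact absurd (hcontra j' m' hm' (by have := m.isLt; omega)) (fun h => h)
end
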